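/- Let S = rowspan(V̄) ∩ ℝ_{≥0}^N where V̄ has full row rank. A vector o ∈ S is extremal (meaning: every v ∈ S with v ≤ o entrywise is a scalar multiple of o) if and only if o is maximally-zero in rowspan(V̄), meaning there is no nonzero w ∈ rowspan(V̄) whose zero set strictly contains the zero set of o. -/

import Mathlib

open scoped BigOperators

/-- in the cone `S = rowspan(V̄) ∩ ℝ₊^N` (for `V̄` of full row rank), a vector
`o ∈ S` is extremal (every `v ∈ S` with `v ≤ o` entrywise is a scalar multiple of `o`)
iff `o` is maximally-zero in `rowspan(V̄)` (no nonzero `w` in the row span has a zero set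
strictly containing that of `o`). -/
theorem extremal_iff_maximallyZero
    {m N : ℕ} (M : Fin m → Fin N → ℝ)
    (hrank : LinearIndependent ℝ M)
    (o : Fin N → ℝ)
    (ho : o ∈ Submodule.span ℝ (Set.range M) ∧ ∀ j, 0 ≤ o j) :
    (∀ v : Fin N → ℝ,
        (v ∈ Submodule.span ℝ (Set.range M) ∧ ∀ j, 0 ≤ v j) →
        (∀ j, v j ≤ o j) → ∃ lam : ℝ, v = lam • o)
    ↔ ¬ ∃ w : Fin N → ℝ, w ∈ Submodule.span ℝ (Set.range M) ∧ w ≠ 0 ∧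
        {j | o j = 0} ⊂ {j | w j = 0} := by
  obtain ⟨hoP, ho0⟩ := ho
  constructor
  · rintro hext ⟨w, hwP, hw0, hsub, hne⟩
    obtain ⟨j₀, hj₀w, hj₀o⟩ := Set.not_subset.mp hne
    have hj₀w : w j₀ = 0 := hj₀w
    have hj₀o : o j₀ ≠ 0 := hj₀o
    have hj₀pos : 0 < o j₀ := lt_of_le_of_ne (ho0 j₀) (Ne.symm hj₀o)
    set F : Finset (Fin N) := Finset.univ.filter (fun j => o j ≠ 0) with hF
    have hFne : F.Nonempty := ⟨j₀, by simp [hF, hj₀o]⟩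
    set ε : ℝ := F.inf' hFne (fun j => o j / (|w j| + 1)) with hε
    have hεpos : 0 < ε := by
      rw [hε, Finset.lt_inf'_iff]
      intro j hj
      have hoj : o j ≠ 0 := by simpa [hF] using hj
      have : 0 < o j := lt_of_le_of_ne (ho0 j) (Ne.symm hoj)
      positivity
    have hb : ∀ j, o j ≠ 0 → ε * |w j| ≤ o j := by
      intro j hj
      have h1 : ε ≤ o j / (|w j| + 1) :=
        Finset.inf'_le _ (by simp [hF, hj])
      have h2 : (0:ℝ) < |w j| + 1 := by positivity
      have h3 : ε * (|w j| + 1) ≤ o j := (le_div_iff₀ h2).mp h1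
      nlinarith [abs_nonneg (w j), hεpos]
    set v : Fin N → ℝ := (1/2 : ℝ) • (o - ε • w) with hv
    have hvj : ∀ j, v j = (1/2) * (o j - ε * w j) := fun j => rfl
    have hvP : v ∈ Submodule.span ℝ (Set.range M) :=
      Submodule.smul_mem _ _ (Submodule.sub_mem _ hoP (Submodule.smul_mem _ _ hwP))
    have hkey : ∀ j, ε * w j ≤ o j ∧ -(o j) ≤ ε * w j := by
      intro j
      by_cases hoj : o j = 0
      · have hwj : w j = 0 := hsub hoj
        simp [hoj, hwj]
      · have hbj := hb j hoj
        have h1 : ε * w j ≤ ε * |w j| := by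
          have := le_abs_self (w j)
          nlinarith
        have h2 : -(ε * |w j|) ≤ ε * w j := by
          have := neg_abs_le (w j)
          nlinarith
        constructor <;> nlinarith
    have hv0 : ∀ j, 0 ≤ v j := by
      intro j
      rw [hvj]
      have := (hkey j).1
      linarith
    have hvle : ∀ j, v j ≤ o j := by
      intro j
      rw [hvj]
      have := (hkey j).2
      linarith
    obtain ⟨lam, hlam⟩ := hext v ⟨hvP, hv0⟩ hvle
    have hlamj : ∀ j, (1/2) * (o j - ε * w j) = lam * o j := by
      intro j
      have := congrFun hlam j
      rw [hvj] at this
      simpa using this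
    have hlam2 : lam = 1/2 := by
      have h := hlamj j₀
      rw [hj₀w] at h
      have h2 : (lam - 1/2) * o j₀ = 0 := by ring_nf; ring_nf at h; linarith
      rcases mul_eq_zero.mp h2 with h3 | h3
      · linarith
      · exact absurd h3 hj₀o
    apply hw0
    funext j
    have := hlamj j
    rw [hlam2] at this
    have hεne : ε ≠ 0 := ne_of_gt hεpos
    have : ε * w j = 0 := by linarith
    exact (mul_eq_zero.mp this).resolve_left hεne
  · rintro h v ⟨hvP, hv0⟩ hvle
    by_cases hvz : v = 0
    · exact ⟨0, by simp [hvz]⟩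
    · obtain ⟨j₀, hj₀⟩ : ∃ j, v j ≠ 0 := by
        by_contra hc
        push_neg at hc
        exact hvz (funext hc)
      set F : Finset (Fin N) := Finset.univ.filter (fun j => v j ≠ 0) with hF
      have hFne : F.Nonempty := ⟨j₀, by simp [hF, hj₀]⟩
      set t : ℝ := F.inf' hFne (fun j => o j / v j) with ht
      have hvpos : ∀ j ∈ F, 0 < v j := by
        intro j hj
        have : v j ≠ 0 := by simpa [hF] using hj
        exact lt_of_le_of_ne (hv0 j) (Ne.symm this)
      have ht1 : 1 ≤ t := by
        rw [ht, Finset.le_inf'_iff]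
        intro j hj
        rw [le_div_iff₀ (hvpos j hj)]
        simpa using hvle j
      set w : Fin N → ℝ := o - t • v with hw
      have hwj : ∀ j, w j = o j - t * v j := fun j => rfl
      have hwP : w ∈ Submodule.span ℝ (Set.range M) :=
        Submodule.sub_mem _ hoP (Submodule.smul_mem _ _ hvP)
      have hsub : {j | o j = 0} ⊆ {j | w j = 0} := by
        intro j hj
        have hoj : o j = 0 := hj
        have hvj : v j = 0 := le_antisymm (hoj ▸ hvle j) (hv0 j)
        show w j = 0
        rw [hwj, hoj, hvj]; ring
      obtain ⟨j₁, hj₁F, hj₁⟩ := F.exists_mem_eq_inf' hFne (fun j => o j / v j)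
      have hvj₁ : 0 < v j₁ := hvpos j₁ hj₁F
      have hwj₁ : w j₁ = 0 := by
        rw [hwj, ht, hj₁]
        field_simp
        ring
      have hoj₁ : o j₁ ≠ 0 := by
        have := hvle j₁
        intro hc
        rw [hc] at this
        linarith
      have hw0 : w = 0 := by
        by_contra hwne
        exact h ⟨w, hwP, hwne, (Set.ssubset_iff_of_subset hsub).mpr ⟨j₁, hwj₁, hoj₁⟩⟩
      have hov : o = t • v := by
        have := sub_eq_zero.mp (hw ▸ hw0 : o - t • v = 0)
        exact this
      have htne : t ≠ 0 := by linarith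
      exact ⟨t⁻¹, by rw [hov, smul_smul, inv_mul_cancel₀ htne, one_smul]⟩
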